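/- Let ρ be a quantum state on a d-dimensional Hilbert space with Hamiltonian H having orthonormal eigenbasis {|E_j⟩}, and let N = {N_i}_{i=1}^n be any energy-incoherent POVM, i.e. N_i = Σ_j q(i|j) |E_j⟩⟨E_j| for a column-stochastic matrix q, with every N_i nonzero. Then the observational ergotropy is bounded above by the incoherent ergotropy: R(ρ, N) ≤ R_incoherent(ρ). -/

import Mathlib

open Matrix ComplexOrder

/-- Passive energy of a state `σ` w.r.t. the Hamiltonian `H`:
the infimum over all unitaries `U` of `Tr (H U σ U†)`. -/
noncomputable def Epass {d : ℕ} (H σ : Matrix (Fin d) (Fin d) ℂ) : ℝ :=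
  ⨅ U : Matrix.unitaryGroup (Fin d) ℂ,
    ((H * ((U : Matrix (Fin d) (Fin d) ℂ) * σ * ((U : Matrix (Fin d) (Fin d) ℂ))ᴴ)).trace).re

/-- Coarse-grained state `ρ_cg^M = ∑ i, Tr(ρ M i) • M i / Tr(M i)`. -/
noncomputable def cgState {d n : ℕ} (ρ : Matrix (Fin d) (Fin d) ℂ)
    (M : Fin n → Matrix (Fin d) (Fin d) ℂ) : Matrix (Fin d) (Fin d) ℂ :=
  ∑ i, (((ρ * M i).trace) / ((M i).trace)) • M i

/-- Observational ergotropy `R(ρ, M) = Tr(H ρ) - Epass(ρ_cg^M)`. -/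
noncomputable def obsErg {d n : ℕ} (ρ H : Matrix (Fin d) (Fin d) ℂ)
    (M : Fin n → Matrix (Fin d) (Fin d) ℂ) : ℝ :=
  ((H * ρ).trace).re - Epass H (cgState ρ M)

/-- A fine-grained measurement: a family of rank-one mutually orthogonal
(Hermitian) projectors summing to the identity. -/
def FineGrained {d : ℕ} (P : Fin d → Matrix (Fin d) (Fin d) ℂ) : Prop :=
  (∀ i, (P i).IsHermitian) ∧ (∀ i j, P i * P j = if i = j then P i else 0) ∧
    (∑ i, P i = 1) ∧ (∀ i, (P i).rank = 1)

/-- A column-stochastic matrix: nonnegative entries, every column sums to 1. -/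
def ColStochastic {n d : ℕ} (D : Matrix (Fin n) (Fin d) ℝ) : Prop :=
  (∀ i j, 0 ≤ D i j) ∧ ∀ j, ∑ i, D i j = 1

/-- A doubly stochastic matrix: nonnegative entries, all row and column sums are 1. -/
def DoublyStochastic {d : ℕ} (B : Matrix (Fin d) (Fin d) ℝ) : Prop :=
  (∀ i j, 0 ≤ B i j) ∧ (∀ i, ∑ j, B i j = 1) ∧ (∀ j, ∑ i, B i j = 1)

/-- The entries of `x` rearranged in non-increasing order. -/
noncomputable def descSort {d : ℕ} (x : Fin d → ℝ) : Fin d → ℝ :=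
  fun i => x (Tuple.sort x i.rev)

/-- `Majorized x y` (`x ≺ y`): for every `k` the sum of the `k` largest entries
of `x` is at most that of `y`, with equal total sums. -/
def Majorized {d : ℕ} (x y : Fin d → ℝ) : Prop :=
  (∀ k : ℕ, (∑ i : Fin d, if (i : ℕ) < k then descSort x i else 0) ≤
      ∑ i : Fin d, if (i : ℕ) < k then descSort y i else 0) ∧
    (∑ i, x i = ∑ i, y i)

/-- The rank-one projector `|v⟩⟨v|`. -/
noncomputable def projVec {d : ℕ} (v : Fin d → ℂ) : Matrix (Fin d) (Fin d) ℂ :=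
  Matrix.vecMulVec v (star v)

/-- `v` is an orthonormal family: `⟨v i, v j⟩ = δ_{ij}`. -/
def IsONB {d : ℕ} (v : Fin d → (Fin d → ℂ)) : Prop :=
  ∀ i j, star (v i) ⬝ᵥ v j = if i = j then 1 else 0

/-- The dephasing `Δ_ρ = ∑ j ⟨E_j|ρ|E_j⟩ |E_j⟩⟨E_j|` of `ρ` in the basis `v`. -/
noncomputable def dephase {d : ℕ} (ρ : Matrix (Fin d) (Fin d) ℂ)
    (v : Fin d → (Fin d → ℂ)) : Matrix (Fin d) (Fin d) ℂ :=
  ∑ j, (star (v j) ⬝ᵥ (ρ *ᵥ v j)) • projVec (v j)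

/-- Incoherent ergotropy `R_incoherent(ρ) = Tr(H Δ_ρ) - Epass(Δ_ρ)`. -/
noncomputable def Rincoherent {d : ℕ} (ρ H : Matrix (Fin d) (Fin d) ℂ)
    (v : Fin d → (Fin d → ℂ)) : ℝ :=
  ((H * dephase ρ v).trace).re - Epass H (dephase ρ v)


section Helpers

section Aux

variable {d : ℕ}

/-- iInf reindex along an equiv, valid for any InfSet. -/
lemma iInf_equiv_comp {α : Type*} [InfSet α] {ι ι' : Type*} (e : ι ≃ ι') (g : ι' → α) :
    ⨅ x, g (e x) = ⨅ y, g y := by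
  simp only [iInf]
  congr 1
  exact e.surjective.range_comp g

/-- lower bound for the passive-energy objective. -/
lemma epass_bddBelow (H σ : Matrix (Fin d) (Fin d) ℂ) :
    BddBelow (Set.range fun U : Matrix.unitaryGroup (Fin d) ℂ =>
      ((H * ((U : Matrix (Fin d) (Fin d) ℂ) * σ * ((U : Matrix (Fin d) (Fin d) ℂ))ᴴ)).trace).re) := by
  refine ⟨-((∑ a, ∑ b, ‖H a b‖) * (∑ c, ∑ e, ‖σ c e‖)), ?_⟩
  rintro x ⟨U, rfl⟩
  set u : Matrix (Fin d) (Fin d) ℂ := (U : Matrix (Fin d) (Fin d) ℂ) with hu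
  have hUnorm : ∀ i j, ‖u i j‖ ≤ 1 := by
    intro i j
    have h1 : u * uᴴ = 1 := by
      have := U.2
      rw [Matrix.mem_unitaryGroup_iff] at this
      simpa [hu, Matrix.star_eq_conjTranspose] using this
    have h2 : (∑ k, u i k * star (u i k)) = 1 := by
      have := congrFun (congrFun h1 i) i
      simpa [Matrix.mul_apply, Matrix.conjTranspose_apply, Matrix.one_apply] using this
    have h3 : (∑ k, Complex.normSq (u i k)) = 1 := by
      have h2' : ((∑ k, Complex.normSq (u i k) : ℝ) : ℂ) = 1 := by
        push_cast
        rw [← h2]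
        exact Finset.sum_congr rfl fun k _ => (Complex.mul_conj _).symm
      exact_mod_cast h2'
    have h4 : Complex.normSq (u i j) ≤ 1 := by
      rw [← h3]
      exact Finset.single_le_sum (f := fun k => Complex.normSq (u i k))
        (fun k _ => Complex.normSq_nonneg _) (Finset.mem_univ j)
    have h5 : ‖u i j‖ ^ 2 ≤ 1 := by
      rw [Complex.sq_norm]
      exact h4
    nlinarith [norm_nonneg (u i j)]
  have key : ‖(H * (u * σ * uᴴ)).trace‖ ≤ (∑ a, ∑ b, ‖H a b‖) * (∑ c, ∑ e, ‖σ c e‖) := by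
    have expand : (H * (u * σ * uᴴ)).trace
        = ∑ a, ∑ b, ∑ c, ∑ e, H a b * (u b c * (σ c e * star (u a e))) := by
      simp [Matrix.trace, Matrix.mul_apply, Matrix.conjTranspose_apply, Finset.mul_sum,
        Matrix.diag, mul_assoc]
    rw [expand]
    calc ‖∑ a, ∑ b, ∑ c, ∑ e, H a b * (u b c * (σ c e * star (u a e)))‖
        ≤ ∑ a, ∑ b, ∑ c, ∑ e, ‖H a b * (u b c * (σ c e * star (u a e)))‖ := by
          refine (norm_sum_le _ _).trans (Finset.sum_le_sum fun a _ => ?_)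
          refine (norm_sum_le _ _).trans (Finset.sum_le_sum fun b _ => ?_)
          refine (norm_sum_le _ _).trans (Finset.sum_le_sum fun c _ => ?_)
          exact norm_sum_le _ _
      _ ≤ ∑ a, ∑ b, ∑ c, ∑ e, ‖H a b‖ * ‖σ c e‖ := by
          refine Finset.sum_le_sum fun a _ => Finset.sum_le_sum fun b _ =>
            Finset.sum_le_sum fun c _ => Finset.sum_le_sum fun e _ => ?_
          rw [norm_mul, norm_mul, norm_mul, norm_star]
          have h1 : ‖u b c‖ * (‖σ c e‖ * ‖u a e‖) ≤ ‖σ c e‖ := by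
            calc ‖u b c‖ * (‖σ c e‖ * ‖u a e‖) ≤ 1 * (‖σ c e‖ * ‖u a e‖) :=
                  mul_le_mul_of_nonneg_right (hUnorm b c) (by positivity)
              _ = ‖σ c e‖ * ‖u a e‖ := one_mul _
              _ ≤ ‖σ c e‖ * 1 := mul_le_mul_of_nonneg_left (hUnorm a e) (norm_nonneg _)
              _ = ‖σ c e‖ := mul_one _
          have h2 := mul_le_mul_of_nonneg_left h1 (norm_nonneg (H a b))
          simpa [mul_assoc] using h2
      _ = (∑ a, ∑ b, ‖H a b‖) * (∑ c, ∑ e, ‖σ c e‖) := by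
          rw [Finset.sum_mul]
          refine Finset.sum_congr rfl fun a _ => ?_
          rw [Finset.sum_mul]
          refine Finset.sum_congr rfl fun b _ => ?_
          rw [Finset.mul_sum]
          refine Finset.sum_congr rfl fun c _ => ?_
          rw [Finset.mul_sum]
  have h6 : |((H * (u * σ * uᴴ)).trace).re| ≤ ‖(H * (u * σ * uᴴ)).trace‖ := by
    exact Complex.abs_re_le_norm _
  show -((∑ a, ∑ b, ‖H a b‖) * (∑ c, ∑ e, ‖σ c e‖)) ≤ ((H * (u * σ * uᴴ)).trace).re
  have h7 := neg_abs_le (((H * (u * σ * uᴴ)).trace).re)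
  linarith


variable {d : ℕ}

/-- Complex permutation matrix. -/
noncomputable def permC (σ : Equiv.Perm (Fin d)) : Matrix (Fin d) (Fin d) ℂ :=
  Matrix.of fun i j => if σ i = j then 1 else 0

lemma permC_mem (σ : Equiv.Perm (Fin d)) : permC σ ∈ Matrix.unitaryGroup (Fin d) ℂ := by
  rw [Matrix.mem_unitaryGroup_iff]
  ext i k
  simp only [Matrix.mul_apply, Matrix.star_eq_conjTranspose, Matrix.conjTranspose_apply,
    permC, Matrix.of_apply, Matrix.one_apply]
  rw [Finset.sum_eq_single (σ i)]
  · simp [Equiv.apply_eq_iff_eq, eq_comm]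
  · intro b _ hb
    simp [Ne.symm hb]
  · simp

lemma permC_conj_diag (σ : Equiv.Perm (Fin d)) (f : Fin d → ℂ) :
    permC σ * Matrix.diagonal f * (permC σ)ᴴ = Matrix.diagonal (fun j => f (σ j)) := by
  ext i k
  simp only [Matrix.mul_apply, Matrix.conjTranspose_apply, permC, Matrix.of_apply,
    Matrix.diagonal_apply]
  rw [Finset.sum_eq_single (σ i)]
  · by_cases h : i = k
    · subst h; simp
    · have : ¬ σ k = σ i := fun h' => h (σ.injective h').symm
      simp [h, this]
  · intro b _ hb
    rw [Finset.sum_eq_zero]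
    · simp
    · intro m _
      by_cases hm : σ i = m <;> by_cases hmb : m = b <;> simp_all
  · simp

/-- Conjugation invariance of the passive energy. -/
lemma Epass_conj {A : Matrix (Fin d) (Fin d) ℂ} (hA : A ∈ Matrix.unitaryGroup (Fin d) ℂ)
    (X Y : Matrix (Fin d) (Fin d) ℂ) :
    Epass (A * X * Aᴴ) (A * Y * Aᴴ) = Epass X Y := by
  have hA1 : Aᴴ * A = 1 := by
    have := (Matrix.mem_unitaryGroup_iff').mp hA
    simpa [Matrix.star_eq_conjTranspose] using this
  have hA2 : A * Aᴴ = 1 := by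
    have := (Matrix.mem_unitaryGroup_iff).mp hA
    simpa [Matrix.star_eq_conjTranspose] using this
  have cancel : ∀ Z : Matrix (Fin d) (Fin d) ℂ, Aᴴ * (A * Z) = Z := by
    intro Z; rw [← Matrix.mul_assoc, hA1, Matrix.one_mul]
  set a : Matrix.unitaryGroup (Fin d) ℂ := ⟨A, hA⟩ with ha
  let e : Matrix.unitaryGroup (Fin d) ℂ ≃ Matrix.unitaryGroup (Fin d) ℂ :=
    ⟨fun V => a * V * a⁻¹, fun U => a⁻¹ * U * a,
      fun V => by group, fun U => by group⟩
  have hcoe : ∀ V : Matrix.unitaryGroup (Fin d) ℂ,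
      ((a * V * a⁻¹ : Matrix.unitaryGroup (Fin d) ℂ) : Matrix (Fin d) (Fin d) ℂ)
        = A * (V : Matrix (Fin d) (Fin d) ℂ) * Aᴴ := by
    intro V
    rw [← Unitary.star_eq_inv]
    push_cast
    rfl
  have hg : ∀ V : Matrix.unitaryGroup (Fin d) ℂ,
      ((A * X * Aᴴ) * ((A * (V : Matrix (Fin d) (Fin d) ℂ) * Aᴴ) * (A * Y * Aᴴ) *
        (A * (V : Matrix (Fin d) (Fin d) ℂ) * Aᴴ)ᴴ)).trace
      = (X * ((V : Matrix (Fin d) (Fin d) ℂ) * Y * (V : Matrix (Fin d) (Fin d) ℂ)ᴴ)).trace := by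
    intro V
    set v : Matrix (Fin d) (Fin d) ℂ := (V : Matrix (Fin d) (Fin d) ℂ)
    have h1 : (A * X * Aᴴ) * ((A * v * Aᴴ) * (A * Y * Aᴴ) * (A * v * Aᴴ)ᴴ)
        = A * (X * (v * (Y * (vᴴ * Aᴴ)))) := by
      simp only [Matrix.conjTranspose_mul, Matrix.conjTranspose_conjTranspose, Matrix.mul_assoc]
      simp only [cancel]
    rw [h1, Matrix.trace_mul_comm]
    simp only [Matrix.mul_assoc]
    rw [hA1, Matrix.mul_one]
  unfold Epass
  rw [← iInf_equiv_comp e (fun U : Matrix.unitaryGroup (Fin d) ℂ =>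
    (((A * X * Aᴴ) * ((U : Matrix (Fin d) (Fin d) ℂ) * (A * Y * Aᴴ) *
      ((U : Matrix (Fin d) (Fin d) ℂ))ᴴ)).trace).re)]
  refine iInf_congr fun V => ?_
  show (((A * X * Aᴴ) * (((a * V * a⁻¹ : Matrix.unitaryGroup (Fin d) ℂ) : Matrix (Fin d) (Fin d) ℂ)
      * (A * Y * Aᴴ) * (((a * V * a⁻¹ : Matrix.unitaryGroup (Fin d) ℂ) : Matrix (Fin d) (Fin d) ℂ))ᴴ)).trace).re = _
  rw [hcoe V]
  exact congrArg Complex.re (hg V)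


lemma Epass_le_mix (Hm : Matrix (Fin d) (Fin d) ℂ) (p : Fin d → ℂ)
    (w : Equiv.Perm (Fin d) → ℝ) (hw0 : ∀ π, 0 ≤ w π) (hw1 : ∑ π, w π = 1) :
    Epass Hm (Matrix.diagonal p) ≤
      Epass Hm (∑ π : Equiv.Perm (Fin d), (w π : ℂ) • Matrix.diagonal (fun j => p (π j))) := by
  apply le_ciInf
  intro U
  set u : Matrix (Fin d) (Fin d) ℂ := (U : Matrix (Fin d) (Fin d) ℂ) with hu
  have hmat : u * (∑ π : Equiv.Perm (Fin d), (w π : ℂ) • Matrix.diagonal (fun j => p (π j))) * uᴴ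
      = ∑ π : Equiv.Perm (Fin d),
          (w π : ℂ) • ((u * permC π) * Matrix.diagonal p * (u * permC π)ᴴ) := by
    rw [Matrix.mul_sum, Matrix.sum_mul]
    refine Finset.sum_congr rfl fun π _ => ?_
    rw [← permC_conj_diag π p, Matrix.mul_smul, Matrix.smul_mul]
    congr 1
    simp only [Matrix.conjTranspose_mul, Matrix.mul_assoc]
  have expand : ((Hm * (u * (∑ π : Equiv.Perm (Fin d),
        (w π : ℂ) • Matrix.diagonal (fun j => p (π j))) * uᴴ)).trace).re
      = ∑ π : Equiv.Perm (Fin d),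
          w π * ((Hm * ((u * permC π) * Matrix.diagonal p * (u * permC π)ᴴ)).trace).re := by
    rw [hmat, Matrix.mul_sum, Matrix.trace_sum, Complex.re_sum]
    refine Finset.sum_congr rfl fun π _ => ?_
    rw [Matrix.mul_smul, Matrix.trace_smul]
    simp [Complex.re_ofReal_mul]
  rw [expand]
  have hEach : ∀ π : Equiv.Perm (Fin d), Epass Hm (Matrix.diagonal p) ≤
      ((Hm * ((u * permC π) * Matrix.diagonal p * (u * permC π)ᴴ)).trace).re := by
    intro π
    have mem : u * permC π ∈ Matrix.unitaryGroup (Fin d) ℂ :=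
      Submonoid.mul_mem _ U.2 (permC_mem π)
    exact ciInf_le (epass_bddBelow Hm (Matrix.diagonal p)) ⟨u * permC π, mem⟩
  calc Epass Hm (Matrix.diagonal p) = ∑ π : Equiv.Perm (Fin d), w π * Epass Hm (Matrix.diagonal p) := by
        rw [← Finset.sum_mul, hw1, one_mul]
    _ ≤ _ := Finset.sum_le_sum fun π _ => mul_le_mul_of_nonneg_left (hEach π) (hw0 π)


section Basis
variable {d : ℕ} (v : Fin d → (Fin d → ℂ))

/-- change of basis matrix: columns are the `v j`. -/
noncomputable def cob : Matrix (Fin d) (Fin d) ℂ := Matrix.of fun i j => v j i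

lemma cob_conj_mul (hv : IsONB v) : (cob v)ᴴ * (cob v) = 1 := by
  ext i j
  have h := hv i j
  simp only [dotProduct, Pi.star_apply] at h
  simp only [Matrix.mul_apply, Matrix.conjTranspose_apply, cob, Matrix.of_apply,
    Matrix.one_apply]
  simpa using h

lemma cob_mul_conj (hv : IsONB v) : (cob v) * (cob v)ᴴ = 1 :=
  mul_eq_one_comm.mp (cob_conj_mul v hv)

lemma cob_mem (hv : IsONB v) : cob v ∈ Matrix.unitaryGroup (Fin d) ℂ := by
  rw [Matrix.mem_unitaryGroup_iff]
  simpa [Matrix.star_eq_conjTranspose] using cob_mul_conj v hv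

/-- representation of sums of weighted projectors. -/
lemma sum_smul_proj (f : Fin d → ℂ) :
    ∑ j, f j • projVec (v j) = cob v * Matrix.diagonal f * (cob v)ᴴ := by
  ext i k
  simp only [Matrix.sum_apply, Matrix.smul_apply, projVec, Matrix.vecMulVec_apply,
    Pi.star_apply, smul_eq_mul, Matrix.mul_apply, Matrix.conjTranspose_apply,
    cob, Matrix.of_apply]
  refine Finset.sum_congr rfl fun j _ => ?_
  rw [Finset.sum_eq_single j (fun b _ hb => by simp [Matrix.diagonal_apply_ne _ hb])
    (by simp)]
  rw [Matrix.diagonal_apply_eq]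
  ring

lemma trace_cob_diag (hv : IsONB v) (f : Fin d → ℂ) :
    (cob v * Matrix.diagonal f * (cob v)ᴴ).trace = ∑ j, f j := by
  rw [Matrix.trace_mul_cycle, cob_conj_mul v hv, Matrix.one_mul, Matrix.trace_diagonal]

lemma trace_mul_cob_diag (ρ : Matrix (Fin d) (Fin d) ℂ) (f : Fin d → ℂ) :
    (ρ * (cob v * Matrix.diagonal f * (cob v)ᴴ)).trace
      = ∑ j, f j * (star (v j) ⬝ᵥ ρ *ᵥ v j) := by
  rw [show ρ * (cob v * Matrix.diagonal f * (cob v)ᴴ)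
      = (ρ * cob v * Matrix.diagonal f) * (cob v)ᴴ from by simp only [Matrix.mul_assoc],
    Matrix.trace_mul_comm, ← Matrix.mul_assoc, ← Matrix.mul_assoc]
  simp only [Matrix.trace, Matrix.diag, Matrix.mul_diagonal]
  refine Finset.sum_congr rfl fun j _ => ?_
  simp only [Matrix.mul_apply, Matrix.conjTranspose_apply, cob, Matrix.of_apply,
    dotProduct, Matrix.mulVec, Pi.star_apply, Finset.sum_mul, Finset.mul_sum]
  rw [Finset.sum_comm]
  refine Finset.sum_congr rfl fun a _ => Finset.sum_congr rfl fun b _ => by ring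

lemma trace_cob_diag_mul (hv : IsONB v) (f g : Fin d → ℂ) :
    ((cob v * Matrix.diagonal g * (cob v)ᴴ) * (cob v * Matrix.diagonal f * (cob v)ᴴ)).trace
      = ∑ j, g j * f j := by
  have key : (cob v * Matrix.diagonal g * (cob v)ᴴ) * (cob v * Matrix.diagonal f * (cob v)ᴴ)
      = cob v * Matrix.diagonal (fun j => g j * f j) * (cob v)ᴴ := by
    rw [← Matrix.diagonal_mul_diagonal]
    calc (cob v * Matrix.diagonal g * (cob v)ᴴ) * (cob v * Matrix.diagonal f * (cob v)ᴴ)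
        = cob v * Matrix.diagonal g * ((cob v)ᴴ * cob v) * Matrix.diagonal f * (cob v)ᴴ := by
          simp only [Matrix.mul_assoc]
      _ = _ := by rw [cob_conj_mul v hv, Matrix.mul_one]; simp only [Matrix.mul_assoc]
  rw [key, trace_cob_diag v hv]

end Basis


end Aux

end Helpers

/-- for any energy-incoherent POVM `N`, the observational ergotropy
is bounded above by the incoherent ergotropy. -/
theorem obsErg_energyIncoherent_le {d n : ℕ} (ρ H : Matrix (Fin d) (Fin d) ℂ)
    (hρ : ρ.PosSemidef) (hρtr : ρ.trace = 1)
    (E : Fin d → ℝ) (v : Fin d → (Fin d → ℂ)) (hv : IsONB v)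
    (hH : H = ∑ j, (E j : ℂ) • projVec (v j))
    (q : Matrix (Fin n) (Fin d) ℝ) (hq : ColStochastic q)
    (N : Fin n → Matrix (Fin d) (Fin d) ℂ)
    (hN : ∀ i, N i = ∑ j, (q i j : ℂ) • projVec (v j))
    (hN0 : ∀ i, N i ≠ 0) :
    obsErg ρ H N ≤ Rincoherent ρ H v := by
  classical
  have hAU : cob v ∈ Matrix.unitaryGroup (Fin d) ℂ := cob_mem v hv
  set p : Fin d → ℂ := fun j => star (v j) ⬝ᵥ ρ *ᵥ v j with hp_def
  set ph : Fin d → ℝ := fun j => (p j).re with hph_def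
  have hpreal : ∀ j, p j = ((ph j : ℝ) : ℂ) := by
    intro j
    have h0 : 0 ≤ p j := hρ.dotProduct_mulVec_nonneg (v j)
    rw [Complex.nonneg_iff] at h0
    apply Complex.ext
    · simp [hph_def]
    · simpa using h0.2.symm
  have hHrep : H = cob v * Matrix.diagonal (fun j => (E j : ℂ)) * (cob v)ᴴ := by
    rw [hH]; exact sum_smul_proj v _
  have hDrep : dephase ρ v = cob v * Matrix.diagonal p * (cob v)ᴴ := by
    unfold dephase
    exact sum_smul_proj v p
  have hNrep : ∀ i, N i = cob v * Matrix.diagonal (fun j => (q i j : ℂ)) * (cob v)ᴴ := by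
    intro i; rw [hN i]; exact sum_smul_proj v _
  set s : Fin n → ℝ := fun i => ∑ j, q i j with hs_def
  have hs : ∀ i, 0 < s i := by
    intro i
    rcases (Finset.sum_nonneg fun j _ => hq.1 i j).lt_or_eq with h | h
    · exact h
    · exfalso
      apply hN0 i
      have hz : ∀ j ∈ Finset.univ, q i j = 0 :=
        (Finset.sum_eq_zero_iff_of_nonneg fun j _ => hq.1 i j).mp h.symm
      rw [hN i]
      refine Finset.sum_eq_zero fun j _ => ?_
      rw [hz j (Finset.mem_univ j)]
      simp
  set t : Fin n → ℝ := fun i => ∑ j, q i j * ph j with ht_def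
  set r : Fin d → ℝ := fun j => ∑ i, (t i / s i) * q i j with hr_def
  have hNtr : ∀ i, (N i).trace = ((s i : ℝ) : ℂ) := by
    intro i
    rw [hNrep i, trace_cob_diag v hv, hs_def]
    push_cast
    rfl
  have hρNtr : ∀ i, (ρ * N i).trace = ((t i : ℝ) : ℂ) := by
    intro i
    rw [hNrep i, trace_mul_cob_diag]
    have key : ∀ j, (q i j : ℂ) * (star (v j) ⬝ᵥ ρ *ᵥ v j) = ((q i j * ph j : ℝ) : ℂ) := by
      intro j
      have h1 : (star (v j) ⬝ᵥ ρ *ᵥ v j : ℂ) = ((ph j : ℝ) : ℂ) := hpreal j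
      rw [h1]
      push_cast
      ring
    rw [Finset.sum_congr rfl fun j _ => key j, ht_def]
    push_cast
    rfl
  have hc : ∀ i, (ρ * N i).trace / (N i).trace = ((t i / s i : ℝ) : ℂ) := by
    intro i
    rw [hρNtr i, hNtr i]
    norm_cast
  have hsum_diag : ∀ (c : Fin n → ℂ) (f : Fin n → Fin d → ℂ),
      (∑ i, c i • (cob v * Matrix.diagonal (f i) * (cob v)ᴴ))
        = cob v * Matrix.diagonal (fun j => ∑ i, c i * f i j) * (cob v)ᴴ := by
    intro c f
    have hdd : Matrix.diagonal (fun j => ∑ i, c i * f i j)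
        = ∑ i, c i • Matrix.diagonal (f i) := by
      ext a b
      by_cases h : a = b
      · subst h; simp [Matrix.diagonal_apply, Matrix.sum_apply]
      · simp [Matrix.diagonal_apply_ne _ h, Matrix.sum_apply, h]
    rw [hdd, Matrix.mul_sum, Matrix.sum_mul]
    exact Finset.sum_congr rfl fun i _ => by
      rw [Matrix.mul_smul, Matrix.smul_mul]
  have hcg : cgState ρ N
      = cob v * Matrix.diagonal (fun j => ((r j : ℝ) : ℂ)) * (cob v)ᴴ := by
    unfold cgState
    have step : (∑ i, ((ρ * N i).trace / (N i).trace) • N i)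
        = ∑ i, ((t i / s i : ℝ) : ℂ) •
            (cob v * Matrix.diagonal (fun j => (q i j : ℂ)) * (cob v)ᴴ) :=
      Finset.sum_congr rfl fun i _ => by rw [hc i, hNrep i]
    rw [step, hsum_diag]
    congr 2
    funext j
    rw [hr_def]
    push_cast
    rfl
  set B : Matrix (Fin d) (Fin d) ℝ := Matrix.of (fun j k => ∑ i, q i j * q i k / s i)
    with hB_def
  have hBmem : B ∈ doublyStochastic ℝ (Fin d) := by
    rw [mem_doublyStochastic_iff_sum]
    refine ⟨fun j k => ?_, fun j => ?_, fun k => ?_⟩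
    · show 0 ≤ ∑ i, q i j * q i k / s i
      exact Finset.sum_nonneg fun i _ =>
        div_nonneg (mul_nonneg (hq.1 i j) (hq.1 i k)) (hs i).le
    · show (∑ k, ∑ i, q i j * q i k / s i) = 1
      rw [Finset.sum_comm]
      refine (Finset.sum_congr rfl fun i _ => ?_).trans (hq.2 j)
      rw [← Finset.sum_div, ← Finset.mul_sum]
      rw [show (∑ k, q i k) = s i from rfl]
      rw [mul_div_assoc, div_self (hs i).ne', mul_one]
    · show (∑ j, ∑ i, q i j * q i k / s i) = 1
      rw [Finset.sum_comm]
      refine (Finset.sum_congr rfl fun i _ => ?_).trans (hq.2 k)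
      rw [← Finset.sum_div, ← Finset.sum_mul]
      rw [show (∑ j, q i j) = s i from rfl]
      rw [mul_comm, mul_div_assoc, div_self (hs i).ne', mul_one]
  obtain ⟨w, hw0, hw1, hwB⟩ := exists_eq_sum_perm_of_mem_doublyStochastic hBmem
  have hrB : ∀ j, r j = ∑ k, B j k * ph k := by
    intro j
    have lhs : r j = ∑ i, ∑ k, q i k * ph k / s i * q i j := by
      rw [hr_def]
      refine Finset.sum_congr rfl fun i _ => ?_
      show t i / s i * q i j = _
      rw [ht_def]
      show (∑ k, q i k * ph k) / s i * q i j = _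
      rw [Finset.sum_div, Finset.sum_mul]
    have rhs : (∑ k, B j k * ph k) = ∑ k, ∑ i, q i j * q i k / s i * ph k := by
      refine Finset.sum_congr rfl fun k _ => ?_
      show (∑ i, q i j * q i k / s i) * ph k = _
      rw [Finset.sum_mul]
    rw [lhs, rhs, Finset.sum_comm]
    exact Finset.sum_congr rfl fun i _ => Finset.sum_congr rfl fun k _ => by ring
  have hBentry : ∀ j k, B j k
      = ∑ π : Equiv.Perm (Fin d), w π * (if k = π j then 1 else 0) := by
    intro j k
    rw [← hwB]
    simp only [Matrix.sum_apply, Matrix.smul_apply, Equiv.Perm.permMatrix,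
      PEquiv.toMatrix_apply, Equiv.toPEquiv_apply, Option.mem_def, Option.some.injEq,
      smul_eq_mul, mul_ite, mul_one, mul_zero]
    refine Finset.sum_congr rfl fun π _ => ?_
    rcases eq_or_ne (π j) k with h | h
    · rw [if_pos h, if_pos h.symm]
    · rw [if_neg h, if_neg (Ne.symm h)]
  have hrw : ∀ j, r j = ∑ π : Equiv.Perm (Fin d), w π * ph (π j) := by
    intro j
    rw [hrB j]
    have step : ∀ k, B j k * ph k
        = ∑ π : Equiv.Perm (Fin d), w π * (if k = π j then 1 else 0) * ph k := fun k => by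
      rw [hBentry j k, Finset.sum_mul]
    rw [Finset.sum_congr rfl fun k _ => step k, Finset.sum_comm]
    refine Finset.sum_congr rfl fun π _ => ?_
    rw [Finset.sum_eq_single (π j)]
    · simp
    · intro b _ hb
      simp [hb]
    · simp
  have hdr : Matrix.diagonal (fun j => ((r j : ℝ) : ℂ))
      = ∑ π : Equiv.Perm (Fin d), (w π : ℂ) • Matrix.diagonal (fun j => p (π j)) := by
    ext a b
    by_cases h : a = b
    · subst h
      simp only [Matrix.diagonal_apply_eq, Matrix.sum_apply, Matrix.smul_apply,
        smul_eq_mul]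
      rw [hrw a]
      push_cast
      exact Finset.sum_congr rfl fun π _ => by rw [hpreal (π a)]
    · simp [Matrix.diagonal_apply_ne _ h, Matrix.sum_apply, h]
  have htr : (H * ρ).trace = (H * dephase ρ v).trace := by
    rw [Matrix.trace_mul_comm H ρ, hHrep, trace_mul_cob_diag, hDrep,
      trace_cob_diag_mul v hv]
  have hEcg : Epass H (cgState ρ N)
      = Epass (Matrix.diagonal (fun j => (E j : ℂ)))
          (Matrix.diagonal (fun j => ((r j : ℝ) : ℂ))) := by
    rw [hHrep, hcg]
    exact Epass_conj hAU _ _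
  have hEdp : Epass H (dephase ρ v)
      = Epass (Matrix.diagonal (fun j => (E j : ℂ))) (Matrix.diagonal p) := by
    rw [hHrep, hDrep]
    exact Epass_conj hAU _ _
  have hmono : Epass H (dephase ρ v) ≤ Epass H (cgState ρ N) := by
    rw [hEcg, hEdp, hdr]
    exact Epass_le_mix _ p w hw0 hw1
  unfold obsErg Rincoherent
  rw [htr]
  exact sub_le_sub_left hmono _
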